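/- If A is a balanceable nonnegative matrix and φ* = min_u φ(u) where φ(u) = Σ_{i,j} e^{u_i - u_j} A_{ij}, then φ(0)/φ* ≤ κ, where κ = (Σ_{ij} A_{ij}) / (min_{ij : A_{ij} ≠ 0} A_{ij}). -/

import Mathlib

open Real Finset

noncomputable def rowSum {n : ℕ} (A : Matrix (Fin n) (Fin n) ℝ) (u : Fin n → ℝ) (j : Fin n) : ℝ :=
  ∑ i, Real.exp (u j - u i) * A j i

noncomputable def colSum {n : ℕ} (A : Matrix (Fin n) (Fin n) ℝ) (u : Fin n → ℝ) (j : Fin n) : ℝ :=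
  ∑ i, Real.exp (u i - u j) * A i j

noncomputable def potential {n : ℕ} (A : Matrix (Fin n) (Fin n) ℝ) (u : Fin n → ℝ) : ℝ :=
  ∑ i, ∑ j, Real.exp (u i - u j) * A i j

/-- Initial optimality gap bound:  where
. -/
theorem potential_zero_div_min_le_kappa (n : ℕ) (A : Matrix (Fin n) (Fin n) ℝ)
    (hA : ∀ i j, 0 ≤ A i j) (hA0 : A ≠ 0) (hdiag : ∀ i, A i i = 0)
    (ustar : Fin n → ℝ) (hmin : ∀ u : Fin n → ℝ, potential A ustar ≤ potential A u)
    (m : ℝ) (hm_pos : 0 < m)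
    (hm_le : ∀ i j, A i j ≠ 0 → m ≤ A i j)
    (hm_mem : ∃ i j, A i j ≠ 0 ∧ A i j = m) :
    potential A 0 / potential A ustar ≤ (∑ i, ∑ j, A i j) / m := by
  classical
  obtain ⟨i0, j0, hne, heq⟩ := hm_mem
  set u := ustar with hu
  have hterm : ∀ (w : Fin n → ℝ) (i j : Fin n), 0 ≤ Real.exp (w i - w j) * A i j :=
    fun w i j => mul_nonneg (Real.exp_pos _).le (hA i j)
  have hsingle : ∀ (w : Fin n → ℝ) (i j : Fin n),
      Real.exp (w i - w j) * A i j ≤ potential A w := by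
    intro w i j
    calc Real.exp (w i - w j) * A i j ≤ ∑ j', Real.exp (w i - w j') * A i j' :=
          Finset.single_le_sum (fun j' _ => hterm w i j') (Finset.mem_univ j)
      _ ≤ potential A w := Finset.single_le_sum
          (fun i' _ => Finset.sum_nonneg fun j' _ => hterm w i' j') (Finset.mem_univ i)
  have hm_le_star : m ≤ potential A u := by
    by_cases hc : u j0 ≤ u i0
    · calc m = 1 * m := (one_mul m).symm
        _ ≤ Real.exp (u i0 - u j0) * A i0 j0 := by
            rw [heq]
            apply mul_le_mul_of_nonneg_right _ hm_pos.le
            exact Real.one_le_exp (by linarith)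
        _ ≤ potential A u := hsingle u i0 j0
    · push_neg at hc
      set v : Fin n → ℝ := fun k => if u i0 < u k then u k + 1 else u k with hv
      set P := ∑ i, ∑ j,
        (if u i0 < u i ∧ ¬ u i0 < u j then Real.exp (u i - u j) * A i j else 0) with hP
      set Q := ∑ i, ∑ j,
        (if ¬ u i0 < u i ∧ u i0 < u j then Real.exp (u i - u j) * A i j else 0) with hQ
      have key : ∀ i j : Fin n, Real.exp (v i - v j) * A i j
          = Real.exp (u i - u j) * A i j
            + (Real.exp 1 - 1) *
              (if u i0 < u i ∧ ¬ u i0 < u j then Real.exp (u i - u j) * A i j else 0)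
            + (Real.exp (-1) - 1) *
              (if ¬ u i0 < u i ∧ u i0 < u j then Real.exp (u i - u j) * A i j else 0) := by
        intro i j
        by_cases hi : u i0 < u i <;> by_cases hj : u i0 < u j <;>
          simp only [hv, hi, hj, if_true, if_false, not_true, not_false_iff,
            true_and, false_and, and_true, and_false, if_pos, if_neg, mul_zero,
            add_zero, zero_add]
        · have : u i + 1 - (u j + 1) = u i - u j := by ring
          rw [this]
        · have : u i + 1 - u j = (u i - u j) + 1 := by ring
          rw [this, Real.exp_add]; ring
        · have : u i - (u j + 1) = (u i - u j) + (-1) := by ring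
          rw [this, Real.exp_add]; ring
      have hPQ : potential A v
          = potential A u + (Real.exp 1 - 1) * P + (Real.exp (-1) - 1) * Q := by
        rw [hP, hQ, Finset.mul_sum, Finset.mul_sum]
        simp only [Finset.mul_sum]
        rw [potential, potential, ← Finset.sum_add_distrib, ← Finset.sum_add_distrib]
        refine Finset.sum_congr rfl fun i _ => ?_
        rw [← Finset.sum_add_distrib, ← Finset.sum_add_distrib]
        exact Finset.sum_congr rfl fun j _ => key i j
      have hmin' : potential A u ≤ potential A v := hmin v
      rw [hPQ] at hmin'
      have hQpos : 0 < Q := by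
        have hcond : (¬ u i0 < u i0 ∧ u i0 < u j0) := ⟨lt_irrefl _, hc⟩
        have h1 : Real.exp (u i0 - u j0) * A i0 j0
            ≤ ∑ j, (if ¬ u i0 < u i0 ∧ u i0 < u j then Real.exp (u i0 - u j) * A i0 j else 0) := by
          have := Finset.single_le_sum
            (f := fun j => if ¬ u i0 < u i0 ∧ u i0 < u j then Real.exp (u i0 - u j) * A i0 j else 0)
            (fun j _ => by split_ifs; exacts [hterm u i0 j, le_rfl]) (Finset.mem_univ j0)
          simpa [hcond.2] using this
        have h2 : (∑ j, (if ¬ u i0 < u i0 ∧ u i0 < u j then Real.exp (u i0 - u j) * A i0 j else 0))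
            ≤ Q := by
          refine Finset.single_le_sum (f := fun i => ∑ j,
            (if ¬ u i0 < u i ∧ u i0 < u j then Real.exp (u i - u j) * A i j else 0))
            (fun i _ => Finset.sum_nonneg fun j _ => by
              split_ifs; exacts [hterm u i j, le_rfl]) (Finset.mem_univ i0)
        have hpos : 0 < Real.exp (u i0 - u j0) * A i0 j0 := by
          rw [heq]; positivity
        linarith
      have he1 : (1:ℝ) < Real.exp 1 := by
        have := Real.add_one_lt_exp (x := 1) one_ne_zero
        linarith
      have hem1 : Real.exp (-1) < 1 := by
        rw [Real.exp_lt_one_iff]; norm_num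
      have hPpos : 0 < P := by nlinarith
      have hP0 : (∑ i : Fin n, (0:ℝ)) < ∑ i, ∑ j,
          (if u i0 < u i ∧ ¬ u i0 < u j then Real.exp (u i - u j) * A i j else 0) := by
        rw [Finset.sum_const_zero]
        exact hP ▸ hPpos
      obtain ⟨i, _, hi⟩ := Finset.exists_lt_of_sum_lt hP0
      have hi0 : (∑ j : Fin n, (0:ℝ)) < ∑ j,
          (if u i0 < u i ∧ ¬ u i0 < u j then Real.exp (u i - u j) * A i j else 0) := by
        simpa using hi
      obtain ⟨j, _, hj⟩ := Finset.exists_lt_of_sum_lt hi0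
      by_cases hcond : u i0 < u i ∧ ¬ u i0 < u j
      · rw [if_pos hcond] at hj
        have hAij : A i j ≠ 0 := by
          intro h0
          rw [h0, mul_zero] at hj
          exact lt_irrefl _ hj
        have h1 : m ≤ A i j := hm_le i j hAij
        have h2 : A i j ≤ Real.exp (u i - u j) * A i j := by
          nth_rewrite 1 [← one_mul (A i j)]
          apply mul_le_mul_of_nonneg_right _ (hA i j)
          apply Real.one_le_exp
          push_neg at hcond
          have := hcond.2
          linarith [hcond.1]
        linarith [hsingle u i j]
      · rw [if_neg hcond] at hj
        exact absurd hj (lt_irrefl 0)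
  have hφ0 : potential A 0 = ∑ i, ∑ j, A i j := by
    simp [potential]
  have hφ0nn : 0 ≤ potential A 0 :=
    Finset.sum_nonneg fun i _ => Finset.sum_nonneg fun j _ => hterm 0 i j
  calc potential A 0 / potential A ustar ≤ potential A 0 / m :=
        div_le_div_of_nonneg_left hφ0nn hm_pos hm_le_star
    _ = (∑ i, ∑ j, A i j) / m := by rw [hφ0]
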